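/- Every continuous map f : ℝP¹ → ℝP² extends to a continuous map f' : ℝP² → ℝP², where ℝP¹ is regarded as a subspace of ℝP² via the standard (equatorial) inclusion. -/

import Mathlib

noncomputable section
open Metric Set

open Metric Set

abbrev USphere (n : ℕ) : Type :=
  (sphere (0 : EuclideanSpace ℝ (Fin (n+1))) 1 : Set (EuclideanSpace ℝ (Fin (n+1))))

def antipodalSetoid (n : ℕ) : Setoid (USphere n) where
  r x y := (x : EuclideanSpace ℝ (Fin (n+1))) = (y : EuclideanSpace ℝ (Fin (n+1)))
    ∨ (x : EuclideanSpace ℝ (Fin (n+1))) = -(y : EuclideanSpace ℝ (Fin (n+1)))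
  iseqv := by
    constructor
    · intro x; exact Or.inl rfl
    · rintro x y (h | h)
      · exact Or.inl h.symm
      · right; rw [h]; simp
    · rintro x y z (h1 | h1) (h2 | h2)
      · exact Or.inl (h1.trans h2)
      · right; rw [h1, h2]
      · right; rw [h1, h2]
      · left; rw [h1, h2]; simp

def RP (n : ℕ) : Type := Quotient (antipodalSetoid n)

instance (n : ℕ) : TopologicalSpace (RP n) := by unfold RP; infer_instance

/-- `K` is an absolute extensor of `X`: every continuous map into `K` defined on a closed
subset of `X` extends to a continuous map on all of `X`. -/
def IsAbsoluteExtensor (X : Type*) [TopologicalSpace X] (K : Type*) [TopologicalSpace K] : Prop :=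
  ∀ A : Set X, IsClosed A → ∀ f : C(A, K), ∃ g : C(X, K), ∀ a : A, g a = f a

/-- The covering projection from the sphere to projective space. -/
def pcov (n : ℕ) : USphere n → RP n := fun z => Quotient.mk (antipodalSetoid n) z

def coordIncl (n : ℕ) (x : EuclideanSpace ℝ (Fin (n+1))) : EuclideanSpace ℝ (Fin (n+2)) :=
  WithLp.toLp 2 (fun i : Fin (n+2) => if h : (i : ℕ) < n + 1 then x ⟨i, h⟩ else 0)

lemma coordIncl_mem (n : ℕ) (x : USphere n) :
    coordIncl n (x : EuclideanSpace ℝ (Fin (n+1))) ∈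
      sphere (0 : EuclideanSpace ℝ (Fin (n+2))) 1 := by
  obtain ⟨x, hx⟩ := x
  rw [mem_sphere_iff_norm, sub_zero, EuclideanSpace.norm_eq] at hx ⊢
  have h2 : ∑ i : Fin (n+2), ‖coordIncl n x i‖ ^ 2 = ∑ i : Fin (n+1), ‖x i‖ ^ 2 := by
    rw [Fin.sum_univ_castSucc]
    simp [coordIncl, Fin.is_lt, Fin.is_le]
  rw [h2]; exact hx

lemma coordIncl_neg (n : ℕ) (x : EuclideanSpace ℝ (Fin (n+1))) :
    coordIncl n (-x) = -(coordIncl n x) := by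
  ext i
  by_cases h : (i : ℕ) < n + 1 <;> simp [coordIncl, h] <;> split_ifs <;> simp

/-- The equatorial inclusion of spheres. -/
def sphereIncl (n : ℕ) : USphere n → USphere (n+1) :=
  fun x => ⟨coordIncl n (x : EuclideanSpace ℝ (Fin (n+1))), coordIncl_mem n x⟩

/-- The standard (equatorial) inclusion `ℝPⁿ → ℝP^(n+1)`. -/
def rpIncl (n : ℕ) : RP n → RP (n+1) :=
  Quotient.map' (sphereIncl n) (by
    rintro x y (h | h)
    · left; show coordIncl n _ = coordIncl n _; rw [h]
    · right
      show coordIncl n (x : EuclideanSpace ℝ (Fin (n+1))) = -(coordIncl n _)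
      rw [h, coordIncl_neg])
open Metric Set

/-- The real Hilbert space ℓ². -/
abbrev Hilbertl2 : Type := lp (fun _ : ℕ => ℝ) 2

def antipodalSetoidInf : Setoid (sphere (0 : Hilbertl2) 1 : Set Hilbertl2) where
  r x y := (x : Hilbertl2) = (y : Hilbertl2) ∨ (x : Hilbertl2) = -(y : Hilbertl2)
  iseqv := by
    constructor
    · intro x; exact Or.inl rfl
    · rintro x y (h | h)
      · exact Or.inl h.symm
      · right; rw [h]; simp
    · rintro x y z (h1 | h1) (h2 | h2)
      · exact Or.inl (h1.trans h2)
      · right; rw [h1, h2]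
      · right; rw [h1, h2]
      · left; rw [h1, h2]; simp

/-- Infinite real projective space: the quotient of the unit sphere of ℓ² by the
antipodal identification. -/
def RPInf : Type := Quotient antipodalSetoidInf

instance : TopologicalSpace RPInf := by unfold RPInf; infer_instance
abbrev UBall3 : Type := (closedBall (0 : EuclideanSpace ℝ (Fin 3)) 1 : Set (EuclideanSpace ℝ (Fin 3)))

def hemiLift (x : EuclideanSpace ℝ (Fin 3)) : EuclideanSpace ℝ (Fin 4) :=
  WithLp.toLp 2 (fun i : Fin 4 => if h : (i : ℕ) < 3 then x ⟨i, h⟩ else Real.sqrt (1 - ‖x‖ ^ 2))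

lemma hemiLift_mem (x : UBall3) :
    hemiLift (x : EuclideanSpace ℝ (Fin 3)) ∈ sphere (0 : EuclideanSpace ℝ (Fin 4)) 1 := by
  obtain ⟨x, hx⟩ := x
  rw [mem_closedBall, dist_zero_right] at hx
  have hx2 : ‖x‖ ^ 2 ≤ 1 := by nlinarith [norm_nonneg x]
  have hsum : ∑ i : Fin 3, ‖x i‖ ^ 2 = ‖x‖ ^ 2 := by
    rw [EuclideanSpace.norm_eq, Real.sq_sqrt]
    positivity
  rw [mem_sphere_iff_norm, sub_zero, EuclideanSpace.norm_eq]
  have h2 : ∑ i : Fin 4, ‖hemiLift x i‖ ^ 2 = 1 := by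
    rw [Fin.sum_univ_castSucc]
    have hlast : ‖hemiLift x (Fin.last 3)‖ ^ 2 = 1 - ‖x‖ ^ 2 := by
      simp only [hemiLift, WithLp.ofLp_toLp, Fin.last]
      rw [dif_neg (by norm_num)]
      rw [Real.norm_eq_abs, sq_abs, Real.sq_sqrt (by linarith)]
    have hcast : ∀ i : Fin 3, ‖hemiLift x (Fin.castSucc i)‖ ^ 2 = ‖x i‖ ^ 2 := by
      intro i
      simp only [hemiLift, WithLp.ofLp_toLp]
      rw [dif_pos (by exact i.is_lt)]
      congr 1
    rw [hlast]
    rw [Finset.sum_congr rfl (fun i _ => hcast i), hsum]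
    ring
  rw [h2, Real.sqrt_one]

/-- The quotient map `q₃ : B³ → ℝP³` (identify `B³` with the upper hemisphere of `S³`). -/
def q3 : UBall3 → RP 3 := fun x => pcov 3 ⟨hemiLift (x : EuclideanSpace ℝ (Fin 3)), hemiLift_mem x⟩

/-! ### The first modification of ℝP³ -/

/-- The disk of radius 1/3 (the meridian disk `D`). -/
abbrev DiskThird : Type :=
  (closedBall (0 : EuclideanSpace ℝ (Fin 2)) (1/3) : Set (EuclideanSpace ℝ (Fin 2)))

/-- The parametrization of the solid torus `L ⊂ B³`, obtained by rotating the disk `D`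
(of radius 1/3, centered at `(0,1/2,0)` in the yz-plane) about the z-axis. -/
def LparamE (s : USphere 1) (d : EuclideanSpace ℝ (Fin 2)) : EuclideanSpace ℝ (Fin 3) :=
  WithLp.toLp 2 (fun i : Fin 3 =>
    if i = 0 then -((s : EuclideanSpace ℝ (Fin 2)) 1) * (1/2 + d 0)
    else if i = 1 then ((s : EuclideanSpace ℝ (Fin 2)) 0) * (1/2 + d 0)
    else d 1)

lemma circle_sq_sum (s : USphere 1) :
    ((s : EuclideanSpace ℝ (Fin 2)) 0) ^ 2 + ((s : EuclideanSpace ℝ (Fin 2)) 1) ^ 2 = 1 := by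
  obtain ⟨s, hs⟩ := s
  rw [mem_sphere_iff_norm, sub_zero, EuclideanSpace.norm_eq] at hs
  have h0 : (0:ℝ) ≤ ∑ i : Fin 2, ‖s i‖ ^ 2 := by positivity
  have := Real.sq_sqrt h0
  rw [hs] at this
  rw [Fin.sum_univ_two] at this
  simpa [Real.norm_eq_abs, sq_abs] using this.symm

lemma disk_sq_sum (d : EuclideanSpace ℝ (Fin 2)) (hd : d ∈ closedBall (0 : EuclideanSpace ℝ (Fin 2)) (1/3)) :
    (d 0) ^ 2 + (d 1) ^ 2 ≤ 1/9 := by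
  rw [mem_closedBall, dist_zero_right, EuclideanSpace.norm_eq] at hd
  have h0 : (0:ℝ) ≤ ∑ i : Fin 2, ‖d i‖ ^ 2 := by positivity
  have h1 := Real.sq_sqrt h0
  have h2 : (∑ i : Fin 2, ‖d i‖ ^ 2) ≤ 1/9 := by
    nlinarith [Real.sqrt_nonneg (∑ i : Fin 2, ‖d i‖ ^ 2)]
  rw [Fin.sum_univ_two] at h2
  simpa [Real.norm_eq_abs, sq_abs] using h2

lemma LparamE_normsq (s : USphere 1) (d : EuclideanSpace ℝ (Fin 2))
    (hd : d ∈ closedBall (0 : EuclideanSpace ℝ (Fin 2)) (1/3)) :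
    ‖LparamE s d‖ ^ 2 ≤ 7/10 := by
  have hs := circle_sq_sum s
  have hdd := disk_sq_sum d hd
  have hd0 : (d 0) ^ 2 ≤ 1/9 := by nlinarith [sq_nonneg (d 1)]
  have hd0' : d 0 ≤ 1/3 := by nlinarith
  rw [EuclideanSpace.norm_eq, Real.sq_sqrt (by positivity)]
  rw [Fin.sum_univ_three]
  simp only [LparamE, WithLp.ofLp_toLp]
  norm_num [Fin.ext_iff]
  simp only [Real.norm_eq_abs, mul_pow, sq_abs]
  have key : ((s : EuclideanSpace ℝ (Fin 2)) 1) ^ 2 * (1/2 + d 0) ^ 2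
      + ((s : EuclideanSpace ℝ (Fin 2)) 0) ^ 2 * (1/2 + d 0) ^ 2 = (1/2 + d 0) ^ 2 := by
    linear_combination (1/2 + d 0) ^ 2 * hs
  nlinarith [sq_nonneg (d 1), sq_nonneg (1/2 + d 0)]

lemma LparamE_mem (s : USphere 1) (d : EuclideanSpace ℝ (Fin 2))
    (hd : d ∈ closedBall (0 : EuclideanSpace ℝ (Fin 2)) (1/3)) :
    LparamE s d ∈ closedBall (0 : EuclideanSpace ℝ (Fin 3)) 1 := by
  rw [mem_closedBall, dist_zero_right]
  have h := LparamE_normsq s d hd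
  nlinarith [norm_nonneg (LparamE s d)]

/-- The solid torus `L`, viewed as a subset of `ℝP³` (it misses the boundary sphere). -/
def LsetRP : Set (RP 3) :=
  {p | ∃ (s : USphere 1) (d : EuclideanSpace ℝ (Fin 2))
    (hd : d ∈ closedBall (0 : EuclideanSpace ℝ (Fin 2)) (1/3)),
      q3 ⟨LparamE s d, LparamE_mem s d hd⟩ = p}

/-- The point of the boundary circle `∂D` corresponding to `z ∈ S¹` under the standard
identification `ℝP¹ ≅ ∂D` (via the squaring map on the circle). -/
def bdPtE (z : USphere 1) : EuclideanSpace ℝ (Fin 2) :=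
  WithLp.toLp 2 (fun i : Fin 2 =>
    if i = 0 then (((z : EuclideanSpace ℝ (Fin 2)) 0) ^ 2 - ((z : EuclideanSpace ℝ (Fin 2)) 1) ^ 2) / 3
    else (2 * ((z : EuclideanSpace ℝ (Fin 2)) 0) * ((z : EuclideanSpace ℝ (Fin 2)) 1)) / 3)

lemma bdPtE_mem (z : USphere 1) : bdPtE z ∈ closedBall (0 : EuclideanSpace ℝ (Fin 2)) (1/3) := by
  have hz := circle_sq_sum z
  rw [mem_closedBall, dist_zero_right, EuclideanSpace.norm_eq]
  have h1 : ∑ i : Fin 2, ‖bdPtE z i‖ ^ 2 = (1/3 : ℝ) ^ 2 := by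
    rw [Fin.sum_univ_two]
    simp only [bdPtE, WithLp.ofLp_toLp]
    norm_num [Fin.ext_iff]
    simp only [div_pow, mul_pow, sq_abs]
    linear_combination ((((z : EuclideanSpace ℝ (Fin 2)) 0) ^ 2 + ((z : EuclideanSpace ℝ (Fin 2)) 1) ^ 2 + 1) / 9) * hz
  rw [h1, Real.sqrt_sq (by norm_num)]

lemma bdPtE_neg (z w : USphere 1)
    (h : (z : EuclideanSpace ℝ (Fin 2)) = -(w : EuclideanSpace ℝ (Fin 2))) :
    bdPtE z = bdPtE w := by
  ext i
  have h0 : (z : EuclideanSpace ℝ (Fin 2)) 0 = -((w : EuclideanSpace ℝ (Fin 2)) 0) := by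
    rw [h]; rfl
  have h1 : (z : EuclideanSpace ℝ (Fin 2)) 1 = -((w : EuclideanSpace ℝ (Fin 2)) 1) := by
    rw [h]; rfl
  simp only [bdPtE, WithLp.ofLp_toLp, h0, h1]
  ring_nf

/-- The attaching map `S¹ × ℝP¹ → ℝP³` onto the boundary `∂L` of the solid torus,
using the identification of `ℝP¹` with `∂D`. -/
def attachM1 (s : USphere 1) : RP 1 → RP 3 :=
  Quotient.lift (fun z : USphere 1 => q3 ⟨LparamE s (bdPtE z), LparamE_mem s (bdPtE z) (bdPtE_mem z)⟩)
    (by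
      rintro z w (h | h)
      · have : z = w := Subtype.ext h
        rw [this]
      · have : bdPtE z = bdPtE w := bdPtE_neg z w h
        simp only [this])

/-- The underlying type of the first modification `M₁` of `ℝP³`: the disjoint union of
`ℝP³` minus the interior of the solid torus `L` and of `S¹ × ℝP²`. -/
abbrev M1Carrier : Type := {p : RP 3 // p ∉ interior LsetRP} ⊕ (USphere 1 × RP 2)

/-- The gluing relation for the first modification: a boundary point `attachM1 s c ∈ ∂L`
is identified with the point `(s, c) ∈ S¹ × ℝP¹ ⊂ S¹ × ℝP²`. -/
def M1Rel : M1Carrier → M1Carrier → Prop := fun p q =>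
  ∃ (s : USphere 1) (c : RP 1) (h : attachM1 s c ∉ interior LsetRP),
    p = Sum.inl ⟨attachM1 s c, h⟩ ∧ q = Sum.inr (s, rpIncl 1 c)

/-- The first modification `M₁` of `ℝP³`: remove the interior of the solid torus `L` and
attach `S¹ × ℝP²` via the map `S¹ × ℝP¹ → ∂L`. -/
def M1 : Type := Quot M1Rel

instance : TopologicalSpace M1 := by unfold M1; infer_instance

lemma rpIncl_not_mem_LsetRP (c : RP 2) : rpIncl 2 c ∉ LsetRP := by
  rintro ⟨s, d, hd, heq⟩
  obtain ⟨y, rfl⟩ := Quotient.exists_rep c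
  have hmk : rpIncl 2 (Quotient.mk (antipodalSetoid 2) y)
      = Quotient.mk (antipodalSetoid 3) (sphereIncl 2 y) := rfl
  rw [hmk] at heq
  have heq' := Quotient.exact heq
  have hpos : 0 < Real.sqrt (1 - ‖LparamE s d‖ ^ 2) := by
    apply Real.sqrt_pos.mpr
    have := LparamE_normsq s d hd
    linarith
  have hlift3 : hemiLift (LparamE s d) 3 = Real.sqrt (1 - ‖LparamE s d‖ ^ 2) := by
    simp only [hemiLift, WithLp.ofLp_toLp]
    rw [dif_neg (by decide)]
  have hincl3 : (sphereIncl 2 y : EuclideanSpace ℝ (Fin 4)) 3 = 0 := by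
    show coordIncl 2 (y : EuclideanSpace ℝ (Fin 3)) 3 = 0
    simp only [coordIncl, WithLp.ofLp_toLp]
    rw [dif_neg (by decide)]
  rcases heq' with h | h
  · have h3' : hemiLift (LparamE s d) 3 = (sphereIncl 2 y : EuclideanSpace ℝ (Fin 4)) 3 :=
      congrArg (fun v : EuclideanSpace ℝ (Fin 4) => v 3) h
    rw [hlift3, hincl3] at h3'
    linarith
  · have h3' : hemiLift (LparamE s d) 3 = -((sphereIncl 2 y : EuclideanSpace ℝ (Fin 4)) 3) :=
      congrArg (fun v : EuclideanSpace ℝ (Fin 4) => v 3) h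
    rw [hlift3, hincl3, neg_zero] at h3'
    linarith

lemma rpIncl_not_mem_interior_LsetRP (c : RP 2) : rpIncl 2 c ∉ interior LsetRP :=
  fun h => rpIncl_not_mem_LsetRP c (interior_subset h)

/-- The copy of the projective plane `ℝP² = q₃(∂B³)` inside the first modification `M₁`. -/
def rp2ToM1 : RP 2 → M1 :=
  fun c => Quot.mk M1Rel (Sum.inl ⟨rpIncl 2 c, rpIncl_not_mem_interior_LsetRP c⟩)

/-! ### The second modification of ℝP³ -/

/-- The solid torus `R = q₃(L) ⊂ ℝP³`, where `L ⊂ B³` is the cylinder `x² + y² ≤ 1/4`. -/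
def RsetRP : Set (RP 3) :=
  {p | ∃ x : UBall3, ((x : EuclideanSpace ℝ (Fin 3)) 0) ^ 2 + ((x : EuclideanSpace ℝ (Fin 3)) 1) ^ 2 ≤ 1/4
        ∧ q3 x = p}

/-- The copy of `ℝP² = q₃(∂B³)` inside `ℝP³`. -/
def RP2in3 : Set (RP 3) := Set.range (rpIncl 2)

/-- The disk `D = R ∩ ℝP²`. -/
def DsetM2 : Set (RP 3) := RsetRP ∩ RP2in3

/-- The boundary circle `∂D = D ∩ ∂R` of the disk `D`. -/
def bdDM2 : Set (RP 3) := DsetM2 ∩ frontier RsetRP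

/-- The subspace `T = S¹ × ℝP² ∪ {a} × ℝP³` of `S¹ × ℝP³`. -/
def TSpace (a : USphere 1) : Type :=
  {p : USphere 1 × RP 3 // (∃ c : RP 2, p.2 = rpIncl 2 c) ∨ p.1 = a}

instance (a : USphere 1) : TopologicalSpace (TSpace a) := by unfold TSpace; infer_instance

/-- The projection `π : T → S¹` onto the first coordinate. -/
def TProj (a : USphere 1) : C(TSpace a, USphere 1) :=
  ⟨fun p => p.val.1, by exact (continuous_fst.comp continuous_subtype_val)⟩

/-- The underlying type of the second modification `M₂` of `ℝP³`. -/
abbrev M2Carrier (a : USphere 1) : Type := {p : RP 3 // p ∉ interior RsetRP} ⊕ (TSpace a)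

/-- The gluing relation for the second modification, relative to a solid-torus structure
`φ : S¹ × D ≃ₜ R` on `R` and an identification `ψ : ∂D ≃ₜ ℝP¹`: a point `φ(s,d) ∈ ∂R` is
identified with the point `(s, ψ d) ∈ S¹ × ℝP¹ ⊂ S¹ × ℝP² ⊂ T`. -/
def M2Rel (a : USphere 1) (φ : (USphere 1 × ↥DsetM2) ≃ₜ ↥RsetRP) (ψ : ↥bdDM2 ≃ₜ RP 1) :
    M2Carrier a → M2Carrier a → Prop := fun p q =>
  ∃ (s : USphere 1) (d : ↥bdDM2) (h : (φ (s, ⟨d.val, d.prop.1⟩)).val ∉ interior RsetRP),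
    p = Sum.inl ⟨(φ (s, ⟨d.val, d.prop.1⟩)).val, h⟩ ∧
    q = Sum.inr ⟨(s, rpIncl 2 (rpIncl 1 (ψ d))), Or.inl ⟨rpIncl 1 (ψ d), rfl⟩⟩

/-- The second modification `M₂` of `ℝP³`: remove the interior of the solid torus `R` and
attach `S¹ × ℝP² ∪ {a} × ℝP³` via the inclusion `∂R = S¹ × ∂D → S¹ × ℝP² ∪ {a} × ℝP³`. -/
def M2 (a : USphere 1) (φ : (USphere 1 × ↥DsetM2) ≃ₜ ↥RsetRP) (ψ : ↥bdDM2 ≃ₜ RP 1) : Type :=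
  Quot (M2Rel a φ ψ)

instance (a : USphere 1) (φ : (USphere 1 × ↥DsetM2) ≃ₜ ↥RsetRP) (ψ : ↥bdDM2 ≃ₜ RP 1) :
    TopologicalSpace (M2 a φ ψ) := by unfold M2; infer_instance


-- ## my development
namespace RP1ext

/-- negation on the sphere -/
def sneg {n : ℕ} (x : USphere n) : USphere n :=
  ⟨-(x : EuclideanSpace ℝ (Fin (n+1))), by
    have := x.2
    simpa [mem_sphere_iff_norm] using this⟩

lemma continuous_sneg (n : ℕ) : Continuous (sneg (n := n)) := by
  apply Continuous.subtype_mk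
  exact continuous_subtype_val.neg

lemma sneg_sneg {n : ℕ} (x : USphere n) : sneg (sneg x) = x := by
  apply Subtype.ext; simp [sneg]

lemma pcov_sneg {n : ℕ} (x : USphere n) : pcov n (sneg x) = pcov n x := by
  apply Quotient.sound
  right; simp [sneg]

lemma pcov_exact {n : ℕ} {x y : USphere n} (h : pcov n x = pcov n y) :
    x = y ∨ x = sneg y := by
  have := Quotient.exact h
  rcases this with h | h
  · left; exact Subtype.ext h
  · right; exact Subtype.ext (by simpa [sneg] using h)

lemma continuous_pcov (n : ℕ) : Continuous (pcov n) := continuous_quotient_mk'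

lemma isOpen_pcov_preimage_image {n : ℕ} {U : Set (USphere n)} (hU : IsOpen U) :
    IsOpen (pcov n ⁻¹' (pcov n '' U)) := by
  have : pcov n ⁻¹' (pcov n '' U) = U ∪ sneg ⁻¹' U := by
    ext y
    constructor
    · rintro ⟨x, hx, hxy⟩
      rcases pcov_exact hxy with rfl | rfl
      · exact Or.inl hx
      · right; simpa [sneg_sneg] using hx
    · rintro (hy | hy)
      · exact ⟨y, hy, rfl⟩
      · exact ⟨sneg y, hy, pcov_sneg y⟩
  rw [this]
  exact hU.union (hU.preimage (continuous_sneg n))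

lemma isOpenMap_pcov (n : ℕ) : IsOpenMap (pcov n) := by
  intro U hU
  refine (isOpen_coinduced (f := Quotient.mk (antipodalSetoid n))).2 ?_
  exact isOpen_pcov_preimage_image hU

end RP1ext

namespace RP1ext

variable {n : ℕ}

/-- open hemisphere around x -/
def Uplus (x : USphere n) : Set (USphere n) :=
  {y | 0 < inner (y : EuclideanSpace ℝ (Fin (n+1))) (x : EuclideanSpace ℝ (Fin (n+1))) (𝕜 := ℝ)}

lemma isOpen_Uplus (x : USphere n) : IsOpen (Uplus x) := by
  have : Continuous fun y : USphere n =>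
      (inner ℝ (y : EuclideanSpace ℝ (Fin (n+1))) (x : EuclideanSpace ℝ (Fin (n+1))) : ℝ) :=
    continuous_subtype_val.inner continuous_const
  exact isOpen_lt continuous_const this

lemma self_mem_Uplus (x : USphere n) : x ∈ Uplus x := by
  have hx : ‖(x : EuclideanSpace ℝ (Fin (n+1)))‖ = 1 := by
    have := x.2; simpa [mem_sphere_iff_norm] using this
  have : (inner ℝ (x : EuclideanSpace ℝ (Fin (n+1))) (x : EuclideanSpace ℝ (Fin (n+1))) : ℝ)
      = 1 := by
    rw [real_inner_self_eq_norm_sq, hx]; norm_num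
  simp only [Uplus, mem_setOf_eq, this]
  norm_num

/-- local section of the covering over the image of the hemisphere around x -/
def sec (x : USphere n) : RP n → USphere n := fun p =>
  if 0 ≤ (inner ℝ ((Quotient.out p : USphere n) : EuclideanSpace ℝ (Fin (n+1)))
      (x : EuclideanSpace ℝ (Fin (n+1))) : ℝ) then Quotient.out p else sneg (Quotient.out p)

lemma sec_pcov (x : USphere n) {y : USphere n} (hy : y ∈ Uplus x) :
    sec x (pcov n y) = y := by
  have hout : (pcov n y).out = y ∨ (pcov n y).out = sneg y := by
    apply pcov_exact
    have : pcov n ((pcov n y).out) = pcov n y := Quotient.out_eq _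
    exact this
  rcases hout with hout | hout
  · rw [sec, hout, if_pos (le_of_lt hy)]
  · rw [sec, hout]
    have hneg : (inner ℝ ((sneg y : USphere n) : EuclideanSpace ℝ (Fin (n+1)))
        (x : EuclideanSpace ℝ (Fin (n+1))) : ℝ)
        = -(inner ℝ (y : EuclideanSpace ℝ (Fin (n+1))) (x : EuclideanSpace ℝ (Fin (n+1))) : ℝ) := by
      simp [sneg, inner_neg_left]
    have hy' : (0:ℝ) < inner ℝ (y : EuclideanSpace ℝ (Fin (n+1))) (x : EuclideanSpace ℝ (Fin (n+1))) := hy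
    rw [if_neg (by rw [hneg]; simp only [not_le]; linarith), sneg_sneg]

lemma continuousAt_sec (x : USphere n) {y : USphere n} (hy : y ∈ Uplus x) :
    ContinuousAt (sec x) (pcov n y) := by
  rw [ContinuousAt, _root_.tendsto_nhds]
  intro W hW hmem
  rw [sec_pcov x hy] at hmem
  have hO : IsOpen (Uplus x ∩ W) := (isOpen_Uplus x).inter hW
  have himg : IsOpen (pcov n '' (Uplus x ∩ W)) := isOpenMap_pcov n _ hO
  have hpm : pcov n y ∈ pcov n '' (Uplus x ∩ W) := ⟨y, ⟨hy, hmem⟩, rfl⟩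
  refine Filter.mem_of_superset (himg.mem_nhds hpm) ?_
  rintro p ⟨y', ⟨hy', hW'⟩, rfl⟩
  show sec x (pcov n y') ∈ W
  rw [sec_pcov x hy']
  exact hW'

lemma pcov_sec (x : USphere n) {y : USphere n} (hy : y ∈ Uplus x) :
    pcov n (sec x (pcov n y)) = pcov n y := by rw [sec_pcov x hy]

end RP1ext

namespace RP1ext

lemma exists_path_lift {n : ℕ} (γ : ℝ → RP n) (hγ : Continuous γ) :
    ∃ Γ : ℝ → USphere n, ContinuousOn Γ (Icc 0 1) ∧ ∀ t ∈ Icc 0 1, pcov n (Γ t) = γ t := by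
  classical
  -- the covering by preimages of evenly covered sets
  set c : ℝ → Set ℝ := fun t => γ ⁻¹' (pcov n '' (Uplus (Quotient.out (γ t)))) with hc
  have hcopen : ∀ t, IsOpen (c t) :=
    fun t => (isOpenMap_pcov n _ (isOpen_Uplus _)).preimage hγ
  have hccov : Icc (0:ℝ) 1 ⊆ ⋃ t, c t := by
    intro s _
    refine mem_iUnion.2 ⟨s, ?_⟩
    show γ s ∈ pcov n '' (Uplus (Quotient.out (γ s)))
    exact ⟨Quotient.out (γ s), self_mem_Uplus _, Quotient.out_eq _⟩
  obtain ⟨δ, hδ, hball⟩ := lebesgue_number_lemma_of_metric isCompact_Icc hcopen hccov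
  -- induction on n
  have main : ∀ m : ℕ, ∃ Γ : ℝ → USphere n,
      ContinuousOn Γ (Icc 0 (min (m * (δ/2)) 1)) ∧
      ∀ t ∈ Icc 0 (min (m * (δ/2)) 1), pcov n (Γ t) = γ t := by
    intro m
    induction m with
    | zero =>
      refine ⟨fun _ => Quotient.out (γ 0), continuousOn_const, ?_⟩
      intro t ht
      simp only [Nat.cast_zero, zero_mul, min_eq_left (by norm_num : (0:ℝ) ≤ 1)] at ht
      have : t = 0 := le_antisymm ht.2 ht.1
      rw [this]
      exact Quotient.out_eq _
    | succ m ih =>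
      obtain ⟨Γ, hΓc, hΓq⟩ := ih
      set a : ℝ := min (m * (δ/2)) 1 with ha
      set b : ℝ := min ((m+1 : ℕ) * (δ/2)) 1 with hb
      have ha0 : 0 ≤ a := le_min (by positivity) (by norm_num)
      have hab : a ≤ b := by
        apply min_le_min _ le_rfl
        have : (m : ℝ) ≤ (m+1 : ℕ) := by push_cast; linarith
        nlinarith
      have hb1 : b ≤ 1 := min_le_right _ _
      have hba : b - a ≤ δ/2 := by
        rcases le_or_gt ((m:ℝ) * (δ/2)) 1 with h | h
        · have haa : a = m * (δ/2) := min_eq_left h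
          have : b ≤ (m+1 : ℕ) * (δ/2) := min_le_left _ _
          push_cast at this ⊢
          rw [haa]; push_cast; linarith
        · have haa : a = 1 := min_eq_right h.le
          rw [haa]; linarith
      have haI : a ∈ Icc (0:ℝ) 1 := ⟨ha0, le_trans (min_le_right _ _) le_rfl⟩
      obtain ⟨i, hi⟩ := hball a haI
      set x : USphere n := Quotient.out (γ i) with hx
      have hJ : Icc a b ⊆ c i := by
        intro t ht
        apply hi
        rw [mem_ball, Real.dist_eq, abs_lt]
        constructor <;> [linarith [ht.1, hδ]; linarith [ht.2, hba, hδ]]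
      -- on Icc a b, γ t is in the evenly covered set
      have hmem : ∀ t ∈ Icc a b, ∃ y ∈ Uplus x, pcov n y = γ t := fun t ht => hJ ht
      -- second piece
      set Γ₂ : ℝ → USphere n := fun t => sec x (γ t) with hΓ₂
      have hΓ₂q : ∀ t ∈ Icc a b, pcov n (Γ₂ t) = γ t := by
        intro t ht
        obtain ⟨y, hy, hyt⟩ := hmem t ht
        rw [hΓ₂]; simp only
        rw [← hyt, pcov_sec x hy]
      have hΓ₂c : ContinuousOn Γ₂ (Icc a b) := by
        intro t ht
        obtain ⟨y, hy, hyt⟩ := hmem t ht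
        apply ContinuousAt.continuousWithinAt
        have h1 : ContinuousAt (sec x) (γ t) := by rw [← hyt]; exact continuousAt_sec x hy
        exact h1.comp hγ.continuousAt
      have haab : a ∈ Icc a b := ⟨le_rfl, hab⟩
      have haa : a ∈ Icc 0 a := ⟨ha0, le_rfl⟩
      -- match signs at a
      have hmatch : pcov n (Γ₂ a) = pcov n (Γ a) := by rw [hΓ₂q a haab, hΓq a haa]
      set Γ₃ : ℝ → USphere n := if Γ₂ a = Γ a then Γ₂ else fun t => sneg (Γ₂ t) with hΓ₃
      have hΓ₃a : Γ₃ a = Γ a := by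
        rcases pcov_exact hmatch with h | h
        · rw [hΓ₃, if_pos h]; exact h
        · have hne : ¬ (Γ₂ a = Γ a) := by
            intro hcon
            rw [hcon] at h
            have : (Γ a : EuclideanSpace ℝ (Fin (n+1))) = 0 := by
              have h2 : (Γ a : EuclideanSpace ℝ (Fin (n+1)))
                  = -(Γ a : EuclideanSpace ℝ (Fin (n+1))) := congrArg Subtype.val h
              have := congrFun (congrArg WithLp.ofLp h2)
              ext j
              have hj := congrFun (congrArg WithLp.ofLp h2) j
              simp only [PiLp.neg_apply] at hj
              have : (Γ a : EuclideanSpace ℝ (Fin (n+1))) j = 0 := by linarith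
              simpa using this
            have hnorm := (Γ a).2
            rw [mem_sphere_iff_norm, sub_zero, this] at hnorm
            simp at hnorm
          rw [hΓ₃, if_neg hne, h, sneg_sneg]
      have hΓ₃q : ∀ t ∈ Icc a b, pcov n (Γ₃ t) = γ t := by
        intro t ht
        rw [hΓ₃]
        split
        · exact hΓ₂q t ht
        · rw [pcov_sneg]; exact hΓ₂q t ht
      have hΓ₃c : ContinuousOn Γ₃ (Icc a b) := by
        rw [hΓ₃]; split
        · exact hΓ₂c
        · exact (continuous_sneg n).comp_continuousOn hΓ₂c
      -- glue
      refine ⟨fun t => if t ≤ a then Γ t else Γ₃ t, ?_, ?_⟩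
      · apply ContinuousOn.if
        · intro t ht
          have : t = a := by
            have h2 := ht.2
            rw [show {t : ℝ | t ≤ a} = Iic a from rfl, frontier_Iic] at h2
            exact h2
          rw [this, hΓ₃a]
        · apply hΓc.mono
          intro t ht
          rw [show {t : ℝ | t ≤ a} = Iic a from rfl, closure_Iic] at ht
          exact ⟨ht.1.1, ht.2⟩
        · apply hΓ₃c.mono
          intro t ht
          have h2 := ht.2
          rw [show {t : ℝ | ¬ t ≤ a} = Ioi a from by ext u; simp, closure_Ioi] at h2
          exact ⟨h2, ht.1.2⟩
      · intro t ht
        by_cases hta : t ≤ a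
        · simp only [if_pos hta]; exact hΓq t ⟨ht.1, hta⟩
        · simp only [if_neg hta]; exact hΓ₃q t ⟨le_of_not_ge hta, ht.2⟩
  obtain ⟨m, hm⟩ := exists_nat_ge (2/δ)
  obtain ⟨Γ, h1, h2⟩ := main m
  have hmin : min ((m:ℝ) * (δ/2)) 1 = 1 := by
    apply min_eq_right
    calc (1:ℝ) = (2/δ) * (δ/2) := by field_simp
    _ ≤ m * (δ/2) := by apply mul_le_mul_of_nonneg_right hm; positivity
  rw [hmin] at h1 h2
  exact ⟨Γ, h1, h2⟩

end RP1ext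

namespace RP1ext

open Classical in
abbrev E2 : Type := EuclideanSpace ℝ (Fin 2)
abbrev E3 : Type := EuclideanSpace ℝ (Fin 3)

def e2 (a b : ℝ) : E2 := WithLp.toLp 2 (fun i => if i = 0 then a else b)

def e3 (a b c : ℝ) : E3 := WithLp.toLp 2 (fun i => if i = 0 then a else if i = 1 then b else c)

@[simp] lemma e2_zero (a b : ℝ) : e2 a b 0 = a := rfl
@[simp] lemma e2_one (a b : ℝ) : e2 a b 1 = b := rfl
@[simp] lemma e3_zero (a b c : ℝ) : e3 a b c 0 = a := rfl
@[simp] lemma e3_one (a b c : ℝ) : e3 a b c 1 = b := rfl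
@[simp] lemma e3_two (a b c : ℝ) : e3 a b c 2 = c := rfl

lemma norm_e2_sq (a b : ℝ) : ‖e2 a b‖ ^ 2 = a ^ 2 + b ^ 2 := by
  rw [EuclideanSpace.norm_eq, Real.sq_sqrt (by positivity), Fin.sum_univ_two]
  simp [Real.norm_eq_abs, sq_abs]

lemma norm_e3_sq (a b c : ℝ) : ‖e3 a b c‖ ^ 2 = a ^ 2 + b ^ 2 + c ^ 2 := by
  rw [EuclideanSpace.norm_eq, Real.sq_sqrt (by positivity), Fin.sum_univ_three]
  simp [Real.norm_eq_abs, sq_abs]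

lemma norm_eq_one_of_sq {E : Type*} [NormedAddCommGroup E] {x : E} (h : ‖x‖ ^ 2 = 1) :
    ‖x‖ = 1 := by
  nlinarith [norm_nonneg x]

lemma e2_mem_sphere {a b : ℝ} (h : a ^ 2 + b ^ 2 = 1) :
    e2 a b ∈ sphere (0 : E2) 1 := by
  rw [mem_sphere_iff_norm, sub_zero]
  exact norm_eq_one_of_sq (by rw [norm_e2_sq, h])

lemma continuous_e2 {X : Type*} [TopologicalSpace X] {f g : X → ℝ}
    (hf : Continuous f) (hg : Continuous g) : Continuous (fun x => e2 (f x) (g x)) := by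
  have h := PiLp.continuous_toLp 2 (fun _ : Fin 2 => ℝ)
  refine h.comp (continuous_pi fun i => ?_)
  fin_cases i
  · simpa [e2] using hf
  · simpa [e2] using hg

lemma continuous_e3 {X : Type*} [TopologicalSpace X] {f g h : X → ℝ}
    (hf : Continuous f) (hg : Continuous g) (hh : Continuous h) :
    Continuous (fun x => e3 (f x) (g x) (h x)) := by
  have hc := PiLp.continuous_toLp 2 (fun _ : Fin 3 => ℝ)
  refine hc.comp (continuous_pi fun i => ?_)
  fin_cases i
  · simpa [e3] using hf
  · simpa [e3] using hg
  · simpa [e3] using hh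

lemma abs_coord_le_norm {m : ℕ} (z : EuclideanSpace ℝ (Fin m)) (i : Fin m) :
    |z i| ≤ ‖z‖ := by
  rw [EuclideanSpace.norm_eq]
  rw [show |z i| = Real.sqrt (‖z i‖ ^ 2) by rw [Real.sqrt_sq_eq_abs, Real.norm_eq_abs, abs_abs]]
  apply Real.sqrt_le_sqrt
  exact Finset.single_le_sum (f := fun j => ‖z j‖ ^ 2) (fun j _ => by positivity) (Finset.mem_univ i)

open Classical in
/-- "unitization": normalize a nonzero vector, junk value for 0 -/
noncomputable def unitize (y : E3) : E3 := if y = 0 then e3 1 0 0 else ‖y‖⁻¹ • y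

lemma norm_unitize (y : E3) : ‖unitize y‖ = 1 := by
  rw [unitize]
  split
  · exact norm_eq_one_of_sq (by rw [norm_e3_sq]; norm_num)
  · rename_i h
    rw [norm_smul, norm_inv, norm_norm, inv_mul_cancel₀ (norm_ne_zero_iff.2 h)]

lemma unitize_of_norm_one {y : E3} (h : ‖y‖ = 1) : unitize y = y := by
  have hy : y ≠ 0 := by intro h0; rw [h0] at h; simp at h
  rw [unitize, if_neg hy, h]
  simp

lemma unitize_mem (y : E3) : unitize y ∈ sphere (0 : E3) 1 := by
  rw [mem_sphere_iff_norm, sub_zero]; exact norm_unitize y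

/-- the "projectivization" map sending a nonzero vector in ℝ³ to its class in ℝP² -/
noncomputable def K (y : E3) : RP 2 := pcov 2 ⟨unitize y, unitize_mem y⟩

lemma K_of_norm_one {y : E3} (h : ‖y‖ = 1) :
    K y = pcov 2 ⟨y, by rw [mem_sphere_iff_norm, sub_zero]; exact h⟩ := by
  rw [K]
  congr 1
  exact Subtype.ext (unitize_of_norm_one h)

lemma unitize_neg {y : E3} (hy : y ≠ 0) : unitize (-y) = -unitize y := by
  rw [unitize, unitize, if_neg (by simpa using hy), if_neg hy, norm_neg]
  rw [smul_neg]

lemma K_neg {y : E3} (hy : y ≠ 0) : K (-y) = K y := by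
  rw [K, K]
  have h1 : (⟨unitize (-y), unitize_mem (-y)⟩ : USphere 2)
      = sneg ⟨unitize y, unitize_mem y⟩ :=
    Subtype.ext (by show unitize (-y) = -(unitize y); exact unitize_neg hy)
  rw [h1, pcov_sneg]

lemma continuousOn_unitize : ContinuousOn unitize {y : E3 | y ≠ 0} := by
  intro y hy
  apply ContinuousAt.continuousWithinAt
  have hy' : y ≠ 0 := hy
  have hev : unitize =ᶠ[nhds y] fun w => ‖w‖⁻¹ • w := by
    filter_upwards [isOpen_compl_singleton.mem_nhds (by simpa using hy')] with w hw
    rw [unitize, if_neg (by simpa using hw)]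
  have hsm : ContinuousAt (fun w : E3 => ‖w‖⁻¹ • w) y :=
    ContinuousAt.smul (continuousAt_id.norm.inv₀ (norm_ne_zero_iff.2 hy')) continuousAt_id
  exact hsm.congr hev.symm

lemma continuousOn_K : ContinuousOn K {y : E3 | y ≠ 0} := by
  rw [continuousOn_iff_continuous_restrict]
  have h1 : Continuous ({y : E3 | y ≠ 0}.restrict unitize) :=
    continuousOn_iff_continuous_restrict.1 continuousOn_unitize
  exact (continuous_pcov 2).comp (h1.subtype_mk fun y => unitize_mem _)

end RP1ext

namespace RP1ext

lemma sq_coords_of_mem {z : E2} (hz : z ∈ sphere (0 : E2) 1) : z 0 ^ 2 + z 1 ^ 2 = 1 := by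
  rw [mem_sphere_iff_norm, sub_zero] at hz
  have h : ‖z‖ ^ 2 = 1 := by rw [hz]; norm_num
  rw [EuclideanSpace.norm_eq, Real.sq_sqrt (by positivity), Fin.sum_univ_two] at h
  simpa [Real.norm_eq_abs, sq_abs] using h

lemma norm_sq_E3 (w : E3) : ‖w‖ ^ 2 = w 0 ^ 2 + w 1 ^ 2 + w 2 ^ 2 := by
  rw [EuclideanSpace.norm_eq, Real.sq_sqrt (by positivity), Fin.sum_univ_three]
  simp [Real.norm_eq_abs, sq_abs]

/-- parametrization of the unit circle -/
noncomputable def cmS (θ : ℝ) : USphere 1 :=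
  ⟨e2 (Real.cos θ) (Real.sin θ), e2_mem_sphere (by
    have := Real.sin_sq_add_cos_sq θ; linarith)⟩

lemma continuous_cmS : Continuous cmS :=
  (continuous_e2 Real.continuous_cos Real.continuous_sin).subtype_mk _

lemma cmS_surj (z : USphere 1) : ∃ θ : ℝ, cmS θ = z := by
  obtain ⟨z, hz⟩ := z
  have hsq := sq_coords_of_mem hz
  have h0 : -1 ≤ z 0 := by nlinarith
  have h1 : z 0 ≤ 1 := by nlinarith
  by_cases hs : 0 ≤ z 1
  · refine ⟨Real.arccos (z 0), ?_⟩
    apply Subtype.ext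
    show e2 _ _ = z
    ext i
    fin_cases i
    · show Real.cos (Real.arccos (z 0)) = z 0
      exact Real.cos_arccos h0 h1
    · show Real.sin (Real.arccos (z 0)) = z 1
      rw [Real.sin_arccos]
      rw [show 1 - z 0 ^ 2 = z 1 ^ 2 by linarith]
      exact Real.sqrt_sq hs
  · refine ⟨-Real.arccos (z 0), ?_⟩
    apply Subtype.ext
    show e2 _ _ = z
    ext i
    fin_cases i
    · show Real.cos (-Real.arccos (z 0)) = z 0
      rw [Real.cos_neg]
      exact Real.cos_arccos h0 h1
    · show Real.sin (-Real.arccos (z 0)) = z 1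
      rw [Real.sin_neg, Real.sin_arccos]
      rw [show 1 - z 0 ^ 2 = z 1 ^ 2 by linarith]
      rw [Real.sqrt_sq_eq_abs, abs_of_nonpos (le_of_not_ge hs)]
      ring

lemma continuous_coordE3 (i : Fin 3) : Continuous fun y : E3 => y i :=
  (continuous_apply i).comp (PiLp.continuous_ofLp 2 (fun _ : Fin 3 => ℝ))

lemma continuous_coordE2 (i : Fin 2) : Continuous fun y : E2 => y i :=
  (continuous_apply i).comp (PiLp.continuous_ofLp 2 (fun _ : Fin 2 => ℝ))

/-- Stone–Weierstrass approximation of a sphere-valued map on the circle by a smooth-along-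
the-circle map, together with a unit vector `v` missed by the normalized approximation. -/
lemma exists_approx (h : USphere 1 → E3) (hc : Continuous h) (hn : ∀ z, ‖h z‖ = 1) :
    ∃ (p : USphere 1 → E3) (v : E3),
      Continuous p ∧ (∀ z, ‖p z - h z‖ ≤ 1/10) ∧ (∀ z, 9/10 ≤ ‖p z‖) ∧ ‖v‖ = 1 ∧
      ∀ z : USphere 1, v ≠ ‖p z‖⁻¹ • p z := by
  classical
  -- the subalgebra generated by the coordinates
  set c0 : C(USphere 1, ℝ) := ⟨fun z => (z : E2) 0,
    (continuous_coordE2 0).comp continuous_subtype_val⟩ with hc0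
  set c1 : C(USphere 1, ℝ) := ⟨fun z => (z : E2) 1,
    (continuous_coordE2 1).comp continuous_subtype_val⟩ with hc1
  set A : Subalgebra ℝ C(USphere 1, ℝ) := Algebra.adjoin ℝ {c0, c1} with hA
  have hsep : A.SeparatesPoints := by
    intro x y hxy
    have : ∃ i : Fin 2, (x : E2) i ≠ (y : E2) i := by
      by_contra hcon
      push_neg at hcon
      exact hxy (Subtype.ext (PiLp.ext fun i => hcon i))
    obtain ⟨i, hi⟩ := this
    fin_cases i
    · exact ⟨c0, ⟨c0, Algebra.subset_adjoin (by simp), rfl⟩, hi⟩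
    · exact ⟨c1, ⟨c1, Algebra.subset_adjoin (by simp), rfl⟩, hi⟩
  -- smoothness along the circle for members of A
  have hsmooth : ∀ g ∈ A, ContDiff ℝ 1 (fun t : ℝ => (g : C(USphere 1, ℝ)) (cmS t)) := by
    intro g hg
    induction hg using Algebra.adjoin_induction with
    | mem x hx =>
      rcases hx with hx | hx
      · rw [hx]
        have : (fun t : ℝ => c0 (cmS t)) = Real.cos := by
          funext t; simp [hc0, cmS]
        rw [this]; exact Real.contDiff_cos
      · simp only [mem_singleton_iff] at hx
        rw [hx]
        have : (fun t : ℝ => c1 (cmS t)) = Real.sin := by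
          funext t; simp [hc1, cmS]
        rw [this]; exact Real.contDiff_sin
    | algebraMap r =>
      have : (fun t : ℝ => (algebraMap ℝ C(USphere 1, ℝ) r) (cmS t)) = fun _ => r := by
        funext t; simp
      rw [this]; exact contDiff_const
    | add x y hx hy hx' hy' =>
      have : (fun t : ℝ => (x + y) (cmS t))
          = (fun t : ℝ => x (cmS t)) + (fun t => y (cmS t)) := by
        funext t; simp
      rw [this]; exact hx'.add hy'
    | mul x y hx hy hx' hy' =>
      have : (fun t : ℝ => (x * y) (cmS t))
          = (fun t : ℝ => x (cmS t)) * (fun t => y (cmS t)) := by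
        funext t; simp
      rw [this]; exact hx'.mul hy'
  -- approximate each coordinate
  have happrox : ∀ i : Fin 3, ∃ g : A, ∀ z, ‖(g : C(USphere 1, ℝ)) z - h z i‖ < 1/18 := by
    intro i
    exact ContinuousMap.exists_mem_subalgebra_near_continuous_of_separatesPoints A hsep
      (fun z => h z i) ((continuous_coordE3 i).comp hc) (1/18) (by norm_num)
  obtain ⟨g0, hg0⟩ := happrox 0
  obtain ⟨g1, hg1⟩ := happrox 1
  obtain ⟨g2, hg2⟩ := happrox 2
  set p : USphere 1 → E3 := fun z => e3 ((g0 : C(USphere 1, ℝ)) z) ((g1 : C(USphere 1, ℝ)) z)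
    ((g2 : C(USphere 1, ℝ)) z) with hp
  have hpcont : Continuous p :=
    continuous_e3 ((g0 : C(USphere 1, ℝ)).continuous) ((g1 : C(USphere 1, ℝ)).continuous)
      ((g2 : C(USphere 1, ℝ)).continuous)
  have hbound : ∀ z, ‖p z - h z‖ ≤ 1/10 := by
    intro z
    have hsq : ‖p z - h z‖ ^ 2 ≤ 1/100 := by
      rw [norm_sq_E3]
      have e0 : (p z - h z) 0 = (g0 : C(USphere 1, ℝ)) z - h z 0 := by simp [hp]
      have e1 : (p z - h z) 1 = (g1 : C(USphere 1, ℝ)) z - h z 1 := by simp [hp]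
      have e2' : (p z - h z) 2 = (g2 : C(USphere 1, ℝ)) z - h z 2 := by simp [hp]
      rw [e0, e1, e2']
      have b0 := hg0 z; have b1 := hg1 z; have b2 := hg2 z
      rw [Real.norm_eq_abs] at b0 b1 b2
      nlinarith [abs_nonneg ((g0 : C(USphere 1, ℝ)) z - h z 0),
        abs_nonneg ((g1 : C(USphere 1, ℝ)) z - h z 1),
        abs_nonneg ((g2 : C(USphere 1, ℝ)) z - h z 2),
        sq_abs ((g0 : C(USphere 1, ℝ)) z - h z 0),
        sq_abs ((g1 : C(USphere 1, ℝ)) z - h z 1),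
        sq_abs ((g2 : C(USphere 1, ℝ)) z - h z 2)]
    nlinarith [norm_nonneg (p z - h z)]
  have hlow : ∀ z, 9/10 ≤ ‖p z‖ := by
    intro z
    have h1 := hbound z
    have h2 := hn z
    have h3 : ‖h z‖ - ‖p z‖ ≤ ‖p z - h z‖ := by
      have := norm_sub_norm_le (h z) (p z)
      rwa [norm_sub_rev] at this
    linarith
  -- the smooth cone map
  set Ψ : ℝ × ℝ → E3 := fun q => q.2 • p (cmS q.1) with hΨ
  have hΨsm : ContDiff ℝ 1 Ψ := by
    rw [contDiff_euclidean]
    intro i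
    have : (fun q : ℝ × ℝ => Ψ q i) = fun q : ℝ × ℝ => q.2 * (p (cmS q.1)) i := by
      funext q; simp [hΨ]
    rw [this]
    have hgi : ∀ (g : A), ContDiff ℝ 1 (fun q : ℝ × ℝ => (g : C(USphere 1, ℝ)) (cmS q.1)) :=
      fun g => (hsmooth g g.2).comp contDiff_fst
    fin_cases i
    · exact contDiff_snd.mul (by simpa [hp] using hgi g0)
    · exact contDiff_snd.mul (by simpa [hp] using hgi g1)
    · exact contDiff_snd.mul (by simpa [hp] using hgi g2)
  have hdense : Dense (Set.range Ψ)ᶜ := by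
    apply hΨsm.dense_compl_range_of_finrank_lt_finrank
    rw [finrank_euclideanSpace_fin]
    rw [Module.finrank_prod]
    simp
  obtain ⟨x, hx⟩ := hdense.nonempty
  have hx0 : x ≠ 0 := by
    intro h0
    apply hx
    exact ⟨(0, 0), by simp [hΨ, h0]⟩
  refine ⟨p, ‖x‖⁻¹ • x, hpcont, hbound, hlow, ?_, ?_⟩
  · rw [norm_smul, norm_inv, norm_norm, inv_mul_cancel₀ (norm_ne_zero_iff.2 hx0)]
  · intro z hveq
    obtain ⟨t, ht⟩ := cmS_surj z
    apply hx
    refine ⟨(t, ‖x‖ * ‖p z‖⁻¹), ?_⟩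
    show (‖x‖ * ‖p z‖⁻¹) • p (cmS t) = x
    rw [ht]
    have : (‖x‖ * ‖p z‖⁻¹) • p z = ‖x‖ • (‖p z‖⁻¹ • p z) := by
      rw [smul_smul]
    rw [this, ← hveq, smul_smul, mul_inv_cancel₀ (norm_ne_zero_iff.2 hx0), one_smul]

end RP1ext

namespace RP1ext

open Real in
lemma exists_Hv (f : C(RP 1, RP 2)) :
    ∃ Hv : E2 → E3, ContinuousOn Hv (sphere (0:E2) 1) ∧ (∀ z, ‖Hv z‖ = 1) ∧
      ∀ z (hz : z ∈ sphere (0:E2) 1), K (Hv z) = f (pcov 1 ⟨z, hz⟩) := by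
  classical
  set γ : ℝ → RP 2 := fun t => f (pcov 1 (cmS (π * t))) with hγdef
  have hγc : Continuous γ :=
    f.continuous.comp ((continuous_pcov 1).comp (continuous_cmS.comp
      (continuous_const.mul continuous_id)))
  obtain ⟨Γ, hΓc, hΓq⟩ := exists_path_lift γ hγc
  set Γv : ℝ → E3 := fun t => ((Γ t : USphere 2) : E3) with hΓvdef
  have hΓvc : ContinuousOn Γv (Icc 0 1) := continuous_subtype_val.comp_continuousOn hΓc
  have hΓvn : ∀ t, ‖Γv t‖ = 1 := by
    intro t
    have := (Γ t).2
    rwa [mem_sphere_iff_norm, sub_zero] at this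
  have hΓvne : ∀ t, Γv t ≠ 0 := fun t h0 => by
    have := hΓvn t; rw [h0] at this; simp at this
  have hKΓ : ∀ t ∈ Icc (0:ℝ) 1, K (Γv t) = γ t := by
    intro t ht
    rw [K_of_norm_one (hΓvn t)]
    rw [show (⟨Γv t, _⟩ : USphere 2) = Γ t from Subtype.ext rfl]
    exact hΓq t ht
  have h01 : (0:ℝ) ∈ Icc (0:ℝ) 1 := by norm_num
  have h11 : (1:ℝ) ∈ Icc (0:ℝ) 1 := by norm_num
  -- the endpoints agree up to sign
  have hends : Γ 1 = Γ 0 ∨ Γ 1 = sneg (Γ 0) := by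
    apply pcov_exact
    rw [hΓq 1 h11, hΓq 0 h01]
    show f _ = f _
    congr 1
    have hc : cmS (π * 1) = sneg (cmS (π * 0)) := by
      apply Subtype.ext
      show e2 (cos (π*1)) (sin (π*1)) = -(e2 (cos (π*0)) (sin (π*0)))
      ext i
      fin_cases i <;> simp
    rw [hc, pcov_sneg]
  set ε : ℝ := if Γ 1 = Γ 0 then 1 else -1 with hεdef
  have hεval : ε = 1 ∨ ε = -1 := by
    rw [hεdef]; split <;> simp
  have hε1 : ε • Γv 1 = Γv 0 := by
    rw [hεdef]
    split
    · rename_i hcase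
      rw [one_smul, hΓvdef]; simp only; rw [hcase]
    · rename_i hcase
      rcases hends with hcase' | hcase'
      · exact absurd hcase' hcase
      · show (-1 : ℝ) • Γv 1 = Γv 0
        rw [neg_smul, one_smul, hΓvdef]
        simp only [hcase']
        show -(-((Γ 0 : USphere 2) : E3)) = _
        rw [neg_neg]
  have hε2 : Γv 1 = ε • Γv 0 := by
    rcases hεval with h | h <;> rw [h] at hε1 ⊢
    · rw [one_smul] at hε1 ⊢; exact hε1
    · rw [← hε1]; rw [neg_smul, neg_smul, one_smul, one_smul, neg_neg]
  -- define Hv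
  set Hv : E2 → E3 := fun z =>
    if 0 ≤ z 1 then Γv (arccos (z 0) / π) else ε • Γv (1 - arccos (z 0) / π) with hHvdef
  have harc1 : ∀ a : ℝ, arccos a / π ∈ Icc (0:ℝ) 1 :=
    fun a => ⟨div_nonneg (arccos_nonneg a) pi_pos.le, (div_le_one pi_pos).2 (arccos_le_pi a)⟩
  have harc2 : ∀ a : ℝ, 1 - arccos a / π ∈ Icc (0:ℝ) 1 := by
    intro a
    have := harc1 a
    constructor <;> [linarith [this.2]; linarith [this.1]]
  have hHvn : ∀ z, ‖Hv z‖ = 1 := by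
    intro z
    rw [hHvdef]
    simp only
    split
    · exact hΓvn _
    · rw [norm_smul, hΓvn]
      rcases hεval with h | h <;> rw [h] <;> norm_num
  have hHvc : ContinuousOn Hv (sphere (0:E2) 1) := by
    rw [hHvdef]
    apply ContinuousOn.if
    · -- agreement on the frontier
      intro z hz
      have hfr : z 1 = 0 := by
        have h2 := hz.2
        have hsub : frontier {z : E2 | 0 ≤ z 1} ⊆ {z : E2 | z 1 = 0} := by
          have : {z : E2 | 0 ≤ z 1} = (fun z : E2 => z 1) ⁻¹' (Ici 0) := rfl
          rw [this]
          refine subset_trans ((continuous_coordE2 1).frontier_preimage_subset _) ?_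
          rw [frontier_Ici]
          exact fun w hw => hw
        exact hsub h2
      have hz1 : z ∈ sphere (0:E2) 1 := hz.1
      have hsq := sq_coords_of_mem hz1
      rw [hfr] at hsq
      have hz0 : z 0 = 1 ∨ z 0 = -1 := by
        have hfac : (z 0 - 1) * (z 0 + 1) = 0 := by nlinarith
        rcases mul_eq_zero.1 hfac with h | h
        · left; linarith
        · right; linarith
      rcases hz0 with h | h
      · rw [h, arccos_one, zero_div, sub_zero]
        exact hε1.symm
      · rw [h, arccos_neg_one, div_self pi_ne_zero, sub_self]
        exact hε2
    · -- first branch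
      apply ContinuousOn.comp hΓvc
      · exact (continuous_arccos.comp (continuous_coordE2 0)).div_const π |>.continuousOn
      · intro z _
        exact harc1 _
    · -- second branch
      refine ContinuousOn.const_smul (g := fun a : E2 => Γv (1 - arccos (a 0) / π)) ?_ ε
      apply ContinuousOn.comp hΓvc
      · exact (continuous_const.sub
          ((continuous_arccos.comp (continuous_coordE2 0)).div_const π)).continuousOn
      · intro z _
        exact harc2 _
  refine ⟨Hv, hHvc, hHvn, ?_⟩
  intro z hz
  have hsq := sq_coords_of_mem hz
  have hb0 : -1 ≤ z 0 := by nlinarith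
  have hb1 : z 0 ≤ 1 := by nlinarith
  rw [hHvdef]
  simp only
  by_cases hcase : 0 ≤ z 1
  · rw [if_pos hcase, hKΓ _ (harc1 _), hγdef]
    show f _ = f _
    congr 1
    show pcov 1 (cmS (π * (arccos (z 0) / π))) = _
    have hpi : π * (arccos (z 0) / π) = arccos (z 0) := by field_simp
    rw [hpi]
    congr 1
    apply Subtype.ext
    show e2 (cos (arccos (z 0))) (sin (arccos (z 0))) = z
    ext i
    fin_cases i
    · show cos (arccos (z 0)) = z 0
      exact cos_arccos hb0 hb1
    · show sin (arccos (z 0)) = z 1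
      rw [sin_arccos, show 1 - z 0 ^ 2 = z 1 ^ 2 by linarith, Real.sqrt_sq hcase]
  · rw [if_neg hcase]
    have hKs : K (ε • Γv (1 - arccos (z 0) / π)) = K (Γv (1 - arccos (z 0) / π)) := by
      rcases hεval with h | h <;> rw [h]
      · rw [one_smul]
      · rw [neg_smul, one_smul]
        exact K_neg (hΓvne _)
    rw [hKs, hKΓ _ (harc2 _), hγdef]
    show f _ = f _
    congr 1
    have hpi : π * (1 - arccos (z 0) / π) = π - arccos (z 0) := by field_simp
    show pcov 1 (cmS (π * (1 - arccos (z 0) / π))) = _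
    rw [hpi]
    have hcm : cmS (π - arccos (z 0)) = sneg ⟨z, hz⟩ := by
      apply Subtype.ext
      show e2 (cos (π - arccos (z 0))) (sin (π - arccos (z 0))) = -z
      ext i
      fin_cases i
      · show cos (π - arccos (z 0)) = -z 0
        rw [cos_pi_sub, cos_arccos hb0 hb1]
      · show sin (π - arccos (z 0)) = -z 1
        rw [sin_pi_sub, sin_arccos, show 1 - z 0 ^ 2 = z 1 ^ 2 by linarith,
          Real.sqrt_sq_eq_abs, abs_of_nonpos (le_of_not_ge hcase)]
    rw [hcm, pcov_sneg]

end RP1ext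

namespace RP1ext

set_option maxHeartbeats 1000000 in
lemma exists_F (f : C(RP 1, RP 2)) :
    ∃ F : E2 → RP 2, ContinuousOn F (closedBall (0:E2) 1) ∧
      ∀ z, ∀ hz : z ∈ sphere (0:E2) 1, F z = f (pcov 1 ⟨z, hz⟩) := by
  classical
  obtain ⟨Hv, hHvc, hHvn, hHvK⟩ := exists_Hv f
  set hS : USphere 1 → E3 := fun z => Hv (z : E2) with hSdef
  have hScont : Continuous hS := hHvc.comp_continuous continuous_subtype_val fun z => z.2
  have hSnorm : ∀ z, ‖hS z‖ = 1 := fun z => hHvn _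
  obtain ⟨p, v, hpc, hpb, hplow, hvn, hv⟩ := exists_approx hS hScont hSnorm
  set Pv : E2 → E3 := fun w => if hw : w ∈ sphere (0:E2) 1 then p ⟨w, hw⟩ else 0 with hPvdef
  have hPveq : ∀ w (hw : w ∈ sphere (0:E2) 1), Pv w = p ⟨w, hw⟩ := by
    intro w hw; rw [hPvdef]; simp only [dif_pos hw]
  have hPvc : ContinuousOn Pv (sphere (0:E2) 1) := by
    rw [continuousOn_iff_continuous_restrict]
    have : (sphere (0:E2) 1).restrict Pv = fun w : USphere 1 => p w := by
      funext w
      show Pv (w : E2) = p w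
      rw [hPveq _ w.2]
    show Continuous ((sphere (0:E2) 1).restrict Pv); rw [this]
    exact hpc
  have hPvb : ∀ w (hw : w ∈ sphere (0:E2) 1), ‖Pv w - Hv w‖ ≤ 1/10 := by
    intro w hw
    rw [hPveq _ hw]
    exact hpb ⟨w, hw⟩
  have hPvlow : ∀ w (hw : w ∈ sphere (0:E2) 1), 9/10 ≤ ‖Pv w‖ := by
    intro w hw
    rw [hPveq _ hw]
    exact hplow ⟨w, hw⟩
  have hPvbd : ∀ w, ‖Pv w‖ ≤ 11/10 := by
    intro w
    simp only [hPvdef]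
    by_cases hw : w ∈ sphere (0:E2) 1
    · rw [dif_pos hw]
      have h1 := hpb ⟨w, hw⟩
      have h2 := hSnorm ⟨w, hw⟩
      have h3 : ‖p ⟨w, hw⟩‖ - ‖hS ⟨w, hw⟩‖ ≤ ‖p ⟨w, hw⟩ - hS ⟨w, hw⟩‖ := norm_sub_norm_le _ _
      linarith
    · rw [dif_neg hw]; norm_num
  -- normalization map
  set nz : E2 → E2 := fun w => ‖w‖⁻¹ • w with hnzdef
  have hnzmem : ∀ w : E2, w ≠ 0 → nz w ∈ sphere (0:E2) 1 := by
    intro w hw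
    rw [mem_sphere_iff_norm, sub_zero, hnzdef]
    simp only
    rw [norm_smul, norm_inv, norm_norm, inv_mul_cancel₀ (norm_ne_zero_iff.2 hw)]
  have hnzc : ContinuousOn nz {w : E2 | w ≠ 0} := by
    intro w hw
    exact ((continuousAt_id.norm.inv₀ (norm_ne_zero_iff.2 hw)).smul
      continuousAt_id).continuousWithinAt
  have hnzmaps : MapsTo nz {w : E2 | w ≠ 0} (sphere (0:E2) 1) := fun w hw => hnzmem w hw
  have hPN : ContinuousOn (fun w => Pv (nz w)) {w : E2 | w ≠ 0} :=
    hPvc.comp hnzc hnzmaps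
  have hHN : ContinuousOn (fun w => Hv (nz w)) {w : E2 | w ≠ 0} :=
    hHvc.comp hnzc hnzmaps
  -- the radial inner part
  set Rad : E2 → E3 := fun w => (2*‖w‖) • Pv (nz w) with hRaddef
  have hRad0 : Rad 0 = 0 := by rw [hRaddef]; simp
  have hRadc : Continuous Rad := by
    rw [continuous_iff_continuousAt]
    intro z
    by_cases hz : z = 0
    · rw [ContinuousAt, hz, hRad0]
      have hbnd : ∀ w : E2, ‖Rad w‖ ≤ (11/5) * ‖w‖ := by
        intro w
        rw [hRaddef]
        simp only
        rw [norm_smul, Real.norm_eq_abs, abs_of_nonneg (by positivity)]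
        have := hPvbd (nz w)
        nlinarith [norm_nonneg w, norm_nonneg (Pv (nz w))]
      have htend : Filter.Tendsto (fun w : E2 => (11/5 : ℝ) * ‖w‖) (nhds 0) (nhds 0) := by
        have : Continuous fun w : E2 => (11/5 : ℝ) * ‖w‖ :=
          continuous_const.mul continuous_norm
        simpa using this.tendsto 0
      exact squeeze_zero_norm hbnd htend
    · exact ((continuous_const.mul continuous_norm).continuousAt).smul
        (hPN.continuousAt (isOpen_compl_singleton.mem_nhds (by simpa using hz)))
  -- the glued map G
  set G : E2 → E3 := fun z =>
    if ‖z‖ ≤ 1/2 then Rad z + (2*‖z‖-1) • v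
    else (2*‖z‖-1) • Hv (nz z) + (2-2*‖z‖) • Pv (nz z) with hGdef
  have hhalf : {z : E2 | ‖z‖ ≤ 1/2} = closedBall (0:E2) (1/2) := by
    ext w; simp [mem_closedBall, dist_zero_right]
  have hGc : ContinuousOn G (closedBall (0:E2) 1) := by
    rw [hGdef]
    apply ContinuousOn.if
    · -- frontier agreement
      intro z hz
      have hfr : ‖z‖ = 1/2 := by
        have h2 := hz.2
        rw [hhalf, frontier_closedBall _ (by norm_num : (1/2 : ℝ) ≠ 0)] at h2
        rwa [mem_sphere_iff_norm, sub_zero] at h2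
      show (2*‖z‖) • Pv (nz z) + (2*‖z‖-1) • v
        = (2*‖z‖-1) • Hv (nz z) + (2-2*‖z‖) • Pv (nz z)
      rw [hfr]
      norm_num
    · -- inner branch
      exact (hRadc.add ((((continuous_const.mul continuous_norm).sub
        continuous_const)).smul continuous_const)).continuousOn
    · -- outer branch
      have hsub : closedBall (0:E2) 1 ∩ closure {z : E2 | ¬ ‖z‖ ≤ 1/2} ⊆ {w : E2 | w ≠ 0} := by
        intro z hz
        have h2 := hz.2
        have hcl : closure {z : E2 | ¬ ‖z‖ ≤ 1/2} ⊆ {z : E2 | 1/2 ≤ ‖z‖} := by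
          apply closure_minimal
          · intro w hw
            exact le_of_lt (lt_of_not_ge hw)
          · exact isClosed_le continuous_const continuous_norm
        have := hcl h2
        intro h0
        rw [h0] at this
        simp at this
        linarith
      apply ContinuousOn.mono _ hsub
      exact ((((continuous_const.mul continuous_norm).sub continuous_const).continuousOn).smul
        hHN).add ((((continuous_const.sub (continuous_const.mul
          continuous_norm))).continuousOn).smul hPN)
  have hnz_sphere : ∀ z (_ : z ∈ sphere (0:E2) 1), nz z = z := by
    intro z hz
    rw [mem_sphere_iff_norm, sub_zero] at hz
    rw [hnzdef]
    simp only
    rw [hz]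
    norm_num
  have hGb : ∀ z (hz : z ∈ sphere (0:E2) 1), G z = Hv z := by
    intro z hz
    have hzn : ‖z‖ = 1 := by rwa [mem_sphere_iff_norm, sub_zero] at hz
    rw [hGdef]
    simp only
    rw [if_neg (by rw [hzn]; norm_num), hnz_sphere z hz, hzn]
    norm_num
  have hGne : ∀ z, z ∈ closedBall (0:E2) 1 → G z ≠ 0 := by
    intro z hball
    by_cases hle : ‖z‖ ≤ 1/2
    · by_cases hz0 : z = 0
      · rw [hGdef]
        simp only
        rw [if_pos hle, hz0, hRad0]
        intro hcon
        have : ((2:ℝ)*‖(0:E2)‖-1) • v = 0 := by rw [← hcon]; abel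
        rw [norm_zero] at this
        norm_num at this
        have hvnorm := hvn
        rw [this] at hvnorm
        simp at hvnorm
      · -- the interesting inner case
        rw [hGdef]
        simp only
        rw [if_pos hle]
        set u : USphere 1 := ⟨nz z, hnzmem z hz0⟩ with hudef
        have hP : Pv (nz z) = p u := hPveq _ (hnzmem z hz0)
        show (2*‖z‖) • Pv (nz z) + (2*‖z‖-1) • v ≠ 0
        rw [hP]
        set r := ‖z‖ with hrdef
        intro hcon
        have hr0 : 0 < r := norm_pos_iff.2 hz0
        -- (1-2r) • v = (2r) • p u
        have h1 : (1-2*r) • v = (2*r) • p u := by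
          have h2 : ((2:ℝ)*r-1) • v = -((2*r) • p u) :=
            eq_neg_of_add_eq_zero_right hcon
          rw [show (1-2*r) = -(2*r-1) by ring, neg_smul, h2, neg_neg]
        have hnorm1 : ‖(1-2*r) • v‖ = 1 - 2*r := by
          rw [norm_smul, hvn, Real.norm_eq_abs, mul_one, abs_of_nonneg (by linarith)]
        have hnorm2 : ‖(2*r) • p u‖ = 2*r*‖p u‖ := by
          rw [norm_smul, Real.norm_eq_abs, abs_of_nonneg (by linarith)]
        have heqn : 1 - 2*r = 2*r*‖p u‖ := by rw [← hnorm1, h1, hnorm2]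
        have hpn : (9:ℝ)/10 ≤ ‖p u‖ := hplow u
        have hpos : 0 < 1 - 2*r := by nlinarith
        -- v = c • p u with c = (1-2r)⁻¹ * (2r)
        have hveq : v = ((1-2*r)⁻¹ * (2*r)) • p u := by
          rw [mul_smul, ← h1, smul_smul, inv_mul_cancel₀ (by linarith), one_smul]
        have hc : (1-2*r)⁻¹ * (2*r) = ‖p u‖⁻¹ := by
          have hpu0 : ‖p u‖ ≠ 0 := by linarith
          field_simp
          linarith [heqn]
        rw [hc] at hveq
        exact hv u hveq
    · -- outer case
      rw [hGdef]
      simp only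
      rw [if_neg hle]
      intro hcon
      set H := Hv (nz z) with hHdef
      set P := Pv (nz z) with hPdef
      set r := ‖z‖ with hrdef
      have hr2 : 1/2 < r := lt_of_not_ge hle
      have hHn : ‖H‖ = 1 := hHvn _
      have hPH : ‖P - H‖ ≤ 1/10 := hPvb _ (hnzmem z (by
        intro h0; rw [hrdef] at hr2; rw [h0] at hr2; simp at hr2; linarith))
      -- rewrite G as H + (2-2r) • (P - H) ... plus correction
      have hre : (2*r-1) • H + (2-2*r) • P = H + ((2-2*r) • (P - H)) := by
        rw [show (2*r-1 : ℝ) = 1 - (2-2*r) by ring, sub_smul, one_smul, smul_sub]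
        abel
      rw [hre] at hcon
      -- norm bound
      have hzero : H = - ((2-2*r) • (P - H)) := by
        apply eq_neg_of_add_eq_zero_left hcon
      have hHnorm : ‖H‖ = |2-2*r| * ‖P - H‖ := by
        nth_rewrite 1 [hzero]
        rw [norm_neg, norm_smul, Real.norm_eq_abs]
      rcases le_or_gt r 1 with hr1 | hr1
      · have habs : |2-2*r| ≤ 1 := by rw [abs_le]; constructor <;> linarith
        rw [hHn] at hHnorm
        nlinarith [norm_nonneg (P - H), abs_nonneg (2-2*r)]
      · -- r > 1 impossible on closed ball
        rw [mem_closedBall, dist_zero_right] at hball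
        rw [← hrdef] at hball
        linarith
  refine ⟨fun z => K (G z), ?_, ?_⟩
  · exact continuousOn_K.comp hGc fun z hz => hGne z hz
  · intro z hz
    show K (G z) = f (pcov 1 ⟨z, hz⟩)
    rw [hGb z hz]
    exact hHvK z hz

end RP1ext


open RP1ext in
/-- **Proposition 2.1.** Any map `f : ℝP¹ → ℝP²` extends to a map `f' : ℝP² → ℝP²`. -/
theorem rp1_to_rp2_extends_over_rp2 (f : C(RP 1, RP 2)) :
    ∃ f' : C(RP 2, RP 2), ∀ x : RP 1, f' (rpIncl 1 x) = f x := by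
  classical
  obtain ⟨F, hFc, hFb⟩ := exists_F f
  -- the projection to the first two coordinates
  set prj : E3 → E2 := fun w => e2 (w 0) (w 1) with hprjdef
  have hprjc : Continuous prj :=
    continuous_e2 (continuous_coordE3 0) (continuous_coordE3 1)
  have hprj_norm : ∀ w : E3, ‖prj w‖ ^ 2 = (w 0) ^ 2 + (w 1) ^ 2 := by
    intro w; rw [hprjdef]; exact norm_e2_sq _ _
  have hprj_mem : ∀ y : USphere 2, prj (y : E3) ∈ closedBall (0:E2) 1 := by
    intro y
    have hy : ‖(y : E3)‖ = 1 := by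
      have := y.2; rwa [mem_sphere_iff_norm, sub_zero] at this
    have h2 : ‖(y : E3)‖ ^ 2 = 1 := by rw [hy]; norm_num
    rw [norm_sq_E3] at h2
    rw [mem_closedBall, dist_zero_right]
    have h3 := hprj_norm (y : E3)
    nlinarith [norm_nonneg (prj (y : E3)), sq_nonneg ((y:E3) 2)]
  have hprj_sph : ∀ y : USphere 2, (y : E3) 2 = 0 → prj (y : E3) ∈ sphere (0:E2) 1 := by
    intro y h20
    have hy : ‖(y : E3)‖ = 1 := by
      have := y.2; rwa [mem_sphere_iff_norm, sub_zero] at this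
    have h2 : ‖(y : E3)‖ ^ 2 = 1 := by rw [hy]; norm_num
    rw [norm_sq_E3, h20] at h2
    rw [mem_sphere_iff_norm, sub_zero]
    apply norm_eq_one_of_sq
    rw [hprj_norm]
    nlinarith
  have hprj_neg : ∀ w : E3, prj (-w) = -(prj w) := by
    intro w
    rw [hprjdef]
    ext i
    fin_cases i <;> simp [e2]
  have hnegball : ∀ w : E2, w ∈ closedBall (0:E2) 1 → -w ∈ closedBall (0:E2) 1 := by
    intro w hw
    rwa [mem_closedBall, dist_zero_right, norm_neg, ← dist_zero_right, ← mem_closedBall]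
  -- F is symmetric on the boundary circle
  have hFneg : ∀ w (hw : w ∈ sphere (0:E2) 1), F w = F (-w) := by
    intro w hw
    have hw' : -w ∈ sphere (0:E2) 1 := by
      rw [mem_sphere_iff_norm, sub_zero, norm_neg, ← sub_zero (w), ← mem_sphere_iff_norm]
      exact hw
    rw [hFb w hw, hFb (-w) hw']
    show f _ = f _
    congr 1
    rw [show (⟨-w, hw'⟩ : USphere 1) = sneg ⟨w, hw⟩ from Subtype.ext rfl, pcov_sneg]
  -- the map on the 2-sphere
  set fhat : USphere 2 → RP 2 := fun y =>
    if (0:ℝ) ≤ (y : E3) 2 then F (prj (y : E3)) else F (-(prj (y : E3))) with hfhatdef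
  have hb1 : Continuous fun y : USphere 2 => F (prj (y : E3)) :=
    hFc.comp_continuous (hprjc.comp continuous_subtype_val) hprj_mem
  have hb2 : Continuous fun y : USphere 2 => F (-(prj (y : E3))) :=
    hFc.comp_continuous ((hprjc.comp continuous_subtype_val).neg)
      (fun y => hnegball _ (hprj_mem y))
  have hagree : ∀ y : USphere 2, (y : E3) 2 = 0 → F (prj (y : E3)) = F (-(prj (y : E3))) :=
    fun y h => hFneg _ (hprj_sph y h)
  have hfhatc : Continuous fhat := by
    rw [hfhatdef]
    exact Continuous.if_le hb1 hb2 continuous_const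
      ((continuous_coordE3 2).comp continuous_subtype_val) (fun y hy => hagree y hy.symm)
  -- invariance under the antipodal map
  have hkey : ∀ y : USphere 2, fhat (sneg y) = fhat y := by
    intro y
    have hsv : ((sneg y : USphere 2) : E3) = -(y : E3) := rfl
    have hsv2 : ((sneg y : USphere 2) : E3) 2 = -((y : E3) 2) := by rw [hsv]; rfl
    rw [hfhatdef]
    simp only
    rw [hsv2, hsv, hprj_neg]
    by_cases h1 : (0:ℝ) ≤ (y : E3) 2
    · by_cases h2 : (0:ℝ) ≤ -((y : E3) 2)
      · have h0 : (y : E3) 2 = 0 := le_antisymm (by linarith) h1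
        rw [if_pos h2, if_pos h1]
        exact (hagree y h0).symm
      · rw [if_neg h2, if_pos h1, neg_neg]
    · by_cases h2 : (0:ℝ) ≤ -((y : E3) 2)
      · rw [if_pos h2, if_neg h1]
      · exfalso; push_neg at h1 h2; linarith
  have hresp : ∀ a b : USphere 2, (antipodalSetoid 2).r a b → fhat a = fhat b := by
    intro a b hab
    rcases hab with h | h
    · rw [Subtype.ext h]
    · have : a = sneg b := Subtype.ext h
      rw [this, hkey]
  refine ⟨⟨Quotient.lift fhat hresp, Continuous.quotient_lift hfhatc hresp⟩, ?_⟩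
  intro x
  induction x using Quotient.inductionOn with
  | h z =>
    show Quotient.lift fhat hresp (rpIncl 1 (Quotient.mk (antipodalSetoid 1) z)) = f _
    have hmap : rpIncl 1 (Quotient.mk (antipodalSetoid 1) z)
        = Quotient.mk (antipodalSetoid 2) (sphereIncl 1 z) := rfl
    rw [hmap]
    show fhat (sphereIncl 1 z) = f (Quotient.mk (antipodalSetoid 1) z)
    have h20 : ((sphereIncl 1 z : USphere 2) : E3) 2 = 0 := by
      show coordIncl 1 (z : E2) 2 = 0
      simp only [coordIncl, WithLp.ofLp_toLp]; rw [dif_neg (by norm_num)]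
    have hprjz : prj ((sphereIncl 1 z : USphere 2) : E3) = (z : E2) := by
      rw [hprjdef]
      ext i
      fin_cases i
      · show coordIncl 1 (z : E2) 0 = (z : E2) 0
        simp only [coordIncl, WithLp.ofLp_toLp]; rw [dif_pos (by norm_num)]
        rfl
      · show coordIncl 1 (z : E2) 1 = (z : E2) 1
        simp only [coordIncl, WithLp.ofLp_toLp]; rw [dif_pos (by norm_num)]
        rfl
    rw [hfhatdef]
    simp only
    rw [h20, if_pos le_rfl, hprjz, hFb (z : E2) z.2]
    rfl
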